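/- Let Σ be a signature and let Σ_C be the signature obtained by adding to Σ a collection C of new constants not occurring in Σ. If φ and ψ are formulas in the language of Σ and the sequent φ ⊢ ψ is derivable in QRC₁ over the signature Σ_C, then φ ⊢ ψ is derivable in QRC₁ over the signature Σ (conservativity of signature extension by constants). -/

import Mathlib

namespace QRC1

/-- Strictly positive formulas of QRC₁ over a signature with constants `Cst`,
relation symbols `Rl`, and arity function `ar`.  Terms are either variables
(natural numbers, left) or constants (right). -/
inductive Fml (Cst Rl : Type) (ar : Rl → ℕ) : Type
  | top : Fml Cst Rl ar
  | rel (S : Rl) (ts : Fin (ar S) → ℕ ⊕ Cst) : Fml Cst Rl ar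
  | and (φ ψ : Fml Cst Rl ar) : Fml Cst Rl ar
  | dia (φ : Fml Cst Rl ar) : Fml Cst Rl ar
  | all (x : ℕ) (φ : Fml Cst Rl ar) : Fml Cst Rl ar

namespace Fml

variable {Cst Rl : Type} {ar : Rl → ℕ}

/-- Free variables of a formula. -/
def fv : Fml Cst Rl ar → Set ℕ
  | .top => ∅
  | .rel _ ts => {x | ∃ i, ts i = Sum.inl x}
  | .and φ ψ => fv φ ∪ fv ψ
  | .dia φ => fv φ
  | .all y φ => fv φ \ {y}

/-- A formula is closed when it has no free variables. -/
def Closed (φ : Fml Cst Rl ar) : Prop := φ.fv = ∅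

/-- Constants occurring in a formula. -/
def consts : Fml Cst Rl ar → Set Cst
  | .top => ∅
  | .rel _ ts => {c | ∃ i, ts i = Sum.inr c}
  | .and φ ψ => consts φ ∪ consts ψ
  | .dia φ => consts φ
  | .all _ φ => consts φ

/-- Substitution of a term for a variable, on terms. -/
def substT (x : ℕ) (t : ℕ ⊕ Cst) : ℕ ⊕ Cst → ℕ ⊕ Cst
  | .inl y => if y = x then t else .inl y
  | .inr c => .inr c

/-- `φ.subst x t` replaces all free occurrences of variable `x` in `φ` by the term `t`. -/
def subst : Fml Cst Rl ar → ℕ → (ℕ ⊕ Cst) → Fml Cst Rl ar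
  | .top, _, _ => .top
  | .rel S ts, x, t => .rel S (fun i => substT x t (ts i))
  | .and φ ψ, x, t => .and (φ.subst x t) (ψ.subst x t)
  | .dia φ, x, t => .dia (φ.subst x t)
  | .all y φ, x, t => if y = x then .all y φ else .all y (φ.subst x t)

/-- `FreeFor t x φ`: the term `t` is free for the variable `x` in `φ`, i.e. no
free occurrence of a variable of `t` becomes bound in `φ[x/t]`. -/
def FreeFor (t : ℕ ⊕ Cst) (x : ℕ) : Fml Cst Rl ar → Prop
  | .top => True
  | .rel _ _ => True
  | .and φ ψ => FreeFor t x φ ∧ FreeFor t x ψ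
  | .dia φ => FreeFor t x φ
  | .all y φ => x ∉ fv (Fml.all y φ) ∨ (t ≠ .inl y ∧ FreeFor t x φ)

/-- Modal depth. -/
def mdepth : Fml Cst Rl ar → ℕ
  | .top => 0
  | .rel _ _ => 0
  | .and φ ψ => max φ.mdepth ψ.mdepth
  | .dia φ => φ.mdepth + 1
  | .all _ φ => φ.mdepth

/-- Quantifier depth. -/
def udepth : Fml Cst Rl ar → ℕ
  | .top => 0
  | .rel _ _ => 0
  | .and φ ψ => max φ.udepth ψ.udepth
  | .dia φ => φ.udepth
  | .all _ φ => φ.udepth + 1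

/-- Number of distinct constants occurring in a formula. -/
noncomputable def cdepth (φ : Fml Cst Rl ar) : ℕ := φ.consts.ncard

/-- Size of a formula (for termination purposes). -/
def size : Fml Cst Rl ar → ℕ
  | .top => 1
  | .rel _ _ => 1
  | .and φ ψ => φ.size + ψ.size + 1
  | .dia φ => φ.size + 1
  | .all _ φ => φ.size + 1

theorem size_subst (φ : Fml Cst Rl ar) (x : ℕ) (t : ℕ ⊕ Cst) :
    (φ.subst x t).size = φ.size := by
  induction φ generalizing x t with
  | top => rfl
  | rel S ts => rfl
  | and φ ψ ihφ ihψ => simp [subst, size, ihφ, ihψ]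
  | dia φ ih => simp [subst, size, ih]
  | all y φ ih => by_cases h : y = x <;> simp [subst, h, size, ih]

/-- The closure of a formula under a set of constants `C`, where the
subformulas of `∀x φ` are all `φ[x/c]` for `c ∈ C`. -/
def cl (C : Set Cst) : Fml Cst Rl ar → Set (Fml Cst Rl ar)
  | .top => {.top}
  | .rel S ts => {.rel S ts, .top}
  | .and φ ψ => {.and φ ψ} ∪ φ.cl C ∪ ψ.cl C
  | .dia φ => {.dia φ} ∪ φ.cl C
  | .all x φ => {.all x φ} ∪ ⋃ c ∈ C, (φ.subst x (.inr c)).cl C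
termination_by φ => φ.size
decreasing_by all_goals (simp [size, size_subst]; try omega)

/-- Renaming of constants along a map `f` (used for signature extensions). -/
def mapC {Cst' : Type} (f : Cst → Cst') : Fml Cst Rl ar → Fml Cst' Rl ar
  | .top => .top
  | .rel S ts => .rel S (fun i => Sum.map id f (ts i))
  | .and φ ψ => .and (φ.mapC f) (ψ.mapC f)
  | .dia φ => .dia (φ.mapC f)
  | .all x φ => .all x (φ.mapC f)

/-- Simultaneous substitution of terms for variables. -/
def msubst (σ : ℕ → ℕ ⊕ Cst) : Fml Cst Rl ar → Fml Cst Rl ar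
  | .top => .top
  | .rel S ts => .rel S (fun i => match ts i with
      | .inl x => σ x
      | .inr c => .inr c)
  | .and φ ψ => .and (φ.msubst σ) (ψ.msubst σ)
  | .dia φ => .dia (φ.msubst σ)
  | .all x φ => .all x (φ.msubst (Function.update σ x (.inl x)))

/-- `φ^g`: replace every free variable `x` of `φ` by the constant `g x`. -/
def capp (g : ℕ → Cst) (φ : Fml Cst Rl ar) : Fml Cst Rl ar :=
  φ.msubst (fun x => .inr (g x))

end Fml

/-- The derivability relation `φ ⊢ ψ` of the calculus QRC₁. -/
inductive Der {Cst Rl : Type} {ar : Rl → ℕ} : Fml Cst Rl ar → Fml Cst Rl ar → Prop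
  | top (φ) : Der φ .top
  | refl (φ) : Der φ φ
  | andE1 (φ ψ) : Der (.and φ ψ) φ
  | andE2 (φ ψ) : Der (.and φ ψ) ψ
  | andI {φ ψ χ} : Der φ ψ → Der φ χ → Der φ (.and ψ χ)
  | cut {φ ψ χ} : Der φ ψ → Der ψ χ → Der φ χ
  | diaMono {φ ψ} : Der φ ψ → Der (.dia φ) (.dia ψ)
  | diaTrans (φ) : Der (.dia (.dia φ)) (.dia φ)
  | allI {φ ψ} (x) : Der φ ψ → x ∉ φ.fv → Der φ (.all x ψ)
  | allE {φ ψ} (x) (t : ℕ ⊕ Cst) : Der (φ.subst x t) ψ → Fml.FreeFor t x φ →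
      Der (.all x φ) ψ
  | inst {φ ψ} (x) (t : ℕ ⊕ Cst) : Der φ ψ → Fml.FreeFor t x φ → Fml.FreeFor t x ψ →
      Der (φ.subst x t) (ψ.subst x t)
  | genC {φ ψ} (x) (c : Cst) : Der (φ.subst x (.inr c)) (ψ.subst x (.inr c)) →
      c ∉ φ.consts → c ∉ ψ.consts → Der φ ψ

section Depths

variable {Cst Rl : Type} {ar : Rl → ℕ}

/-- Modal depth of a set of formulas (the supremum of the modal depths). -/
noncomputable def mdepthSet (Γ : Set (Fml Cst Rl ar)) : ℕ := sSup (Fml.mdepth '' Γ)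

/-- Quantifier depth of a set of formulas. -/
noncomputable def udepthSet (Γ : Set (Fml Cst Rl ar)) : ℕ := sSup (Fml.udepth '' Γ)

/-- Maximum number of distinct constants per formula in a set of formulas. -/
noncomputable def cdepthSet (Γ : Set (Fml Cst Rl ar)) : ℕ := sSup (Fml.cdepth '' Γ)

/-- Closure of a set of formulas under a set of constants. -/
def clSet (C : Set Cst) (Γ : Set (Fml Cst Rl ar)) : Set (Fml Cst Rl ar) :=
  ⋃ γ ∈ Γ, γ.cl C

/-- Conjunction of a finite list of formulas. -/
def conjList : List (Fml Cst Rl ar) → Fml Cst Rl ar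
  | [] => .top
  | φ :: L => .and φ (conjList L)

end Depths

/-- A pair `⟨p⁺, p⁻⟩` of sets of formulas. -/
structure Pair (Cst Rl : Type) (ar : Rl → ℕ) where
  pos : Set (Fml Cst Rl ar)
  neg : Set (Fml Cst Rl ar)

namespace Pair

variable {Cst Rl : Type} {ar : Rl → ℕ}

/-- All formulas of the pair are closed. -/
def ClosedP (p : Pair Cst Rl ar) : Prop := ∀ φ ∈ p.pos ∪ p.neg, φ.Closed

/-- Consistency: the conjunction of (finitely many formulas of) `p⁺` does not
derive any formula of `p⁻`. -/
def Consistent (p : Pair Cst Rl ar) : Prop :=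
  ∀ δ ∈ p.neg, ∀ L : List (Fml Cst Rl ar), (∀ χ ∈ L, χ ∈ p.pos) → ¬ Der (conjList L) δ

/-- `Φ`-maximality: every formula of `Φ` is in `p⁺` or in `p⁻`, and `p`
contains only formulas of `Φ`. -/
def MaximalIn (Φ : Set (Fml Cst Rl ar)) (p : Pair Cst Rl ar) : Prop :=
  (∀ χ ∈ Φ, χ ∈ p.pos ∨ χ ∈ p.neg) ∧ p.pos ∪ p.neg ⊆ Φ

/-- Fully witnessed: every negative universal has a constant witness. -/
def FullyWitnessed (p : Pair Cst Rl ar) : Prop :=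
  ∀ (x : ℕ) (φ : Fml Cst Rl ar), Fml.all x φ ∈ p.neg →
    ∃ c : Cst, φ.subst x (.inr c) ∈ p.neg

/-- `Φ`-maximal, consistent, fully witnessed (and closed) pair. -/
def MCW (Φ : Set (Fml Cst Rl ar)) (p : Pair Cst Rl ar) : Prop :=
  p.ClosedP ∧ p.MaximalIn Φ ∧ p.Consistent ∧ p.FullyWitnessed

end Pair

/-- The relation `R̂` between pairs. -/
def hatR {Cst Rl : Type} {ar : Rl → ℕ} (p q : Pair Cst Rl ar) : Prop :=
  (∀ φ : Fml Cst Rl ar, Fml.dia φ ∈ p.neg → φ ∈ q.neg ∧ Fml.dia φ ∈ q.neg) ∧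
  ∃ ψ : Fml Cst Rl ar, Fml.dia ψ ∈ p.pos ∧ Fml.dia ψ ∈ q.neg

/-- A relational model for QRC₁. -/
structure Model (Cst Rl : Type) (ar : Rl → ℕ) where
  W : Type
  R : W → W → Prop
  Dom : W → Type
  finDom : ∀ w, Finite (Dom w)
  η : ∀ w v, R w v → Dom w → Dom v
  I : ∀ w, Cst → Dom w
  J : ∀ w (S : Rl), Set (Fin (ar S) → Dom w)

namespace Model

variable {Cst Rl : Type} {ar : Rl → ℕ} (M : Model Cst Rl ar)

/-- Value of a term under a `w`-assignment. -/
def tval {w : M.W} (g : ℕ → M.Dom w) : ℕ ⊕ Cst → M.Dom w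
  | .inl x => g x
  | .inr c => M.I w c

/-- Kripke satisfaction `M, w ⊩^g φ`. -/
def Sat : (w : M.W) → (g : ℕ → M.Dom w) → Fml Cst Rl ar → Prop
  | _, _, .top => True
  | w, g, .rel S ts => (fun i => M.tval g (ts i)) ∈ M.J w S
  | w, g, .and φ ψ => Sat w g φ ∧ Sat w g ψ
  | w, g, .dia φ => ∃ (v : M.W) (h : M.R w v), Sat v (fun n => M.η w v h (g n)) φ
  | w, g, .all x φ => ∀ h : ℕ → M.Dom w, (∀ y, y ≠ x → h y = g y) → Sat w h φ

/-- Adequate models: transitive accessibility, transitive `η` functions, and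
concordant interpretation of constants. -/
structure Adequate : Prop where
  trans : Transitive M.R
  etaTrans : ∀ {w u v : M.W} (h1 : M.R w u) (h2 : M.R u v) (h3 : M.R w v),
    M.η w v h3 = M.η u v h2 ∘ M.η w u h1
  concord : ∀ {w u : M.W} (h : M.R w u) (c : Cst), M.I u c = M.η w u h (M.I w c)

/-- Constant domain: all worlds have the same domain. -/
def ConstantDomain : Prop := ∀ w v : M.W, M.Dom w = M.Dom v

end Model


noncomputable section Extension

attribute [local instance 10] Classical.propDecidable

namespace Fml

variable {Cst Cst' Rl : Type} {ar : Rl → ℕ}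

/-- Variables of a term. -/
def tvars : ℕ ⊕ Cst → Finset ℕ
  | .inl x => {x}
  | .inr _ => ∅

/-- Constants of a term. -/
def tconsts : ℕ ⊕ Cst → Finset Cst
  | .inl _ => ∅
  | .inr c => {c}

/-- All (free and bound) variables of a formula, as a finset. -/
def varsF : Fml Cst Rl ar → Finset ℕ
  | .top => ∅
  | .rel _ ts => Finset.univ.biUnion fun i => tvars (ts i)
  | .and φ ψ => varsF φ ∪ varsF ψ
  | .dia φ => varsF φ
  | .all y φ => insert y (varsF φ)

/-- Bound variables of a formula. -/
def bindersF : Fml Cst Rl ar → Finset ℕ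
  | .top => ∅
  | .rel _ _ => ∅
  | .and φ ψ => bindersF φ ∪ bindersF ψ
  | .dia φ => bindersF φ
  | .all y φ => insert y (bindersF φ)

/-- Constants of a formula, as a finset. -/
def constsF : Fml Cst Rl ar → Finset Cst
  | .top => ∅
  | .rel _ ts => Finset.univ.biUnion fun i => tconsts (ts i)
  | .and φ ψ => constsF φ ∪ constsF ψ
  | .dia φ => constsF φ
  | .all _ φ => constsF φ

/-- Mapping constants of a term to terms of another signature. -/
def mapTm (f : Cst → ℕ ⊕ Cst') : ℕ ⊕ Cst → ℕ ⊕ Cst'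
  | .inl x => .inl x
  | .inr c => f c

/-- Mapping constants of a formula to terms of another signature. -/
def mapG (f : Cst → ℕ ⊕ Cst') : Fml Cst Rl ar → Fml Cst' Rl ar
  | .top => .top
  | .rel S ts => .rel S fun i => mapTm f (ts i)
  | .and φ ψ => .and (mapG f φ) (mapG f ψ)
  | .dia φ => .dia (mapG f φ)
  | .all x φ => .all x (mapG f φ)

lemma bindersF_subset_varsF (A : Fml Cst Rl ar) : bindersF A ⊆ varsF A := by
  induction A with
  | top => simp [bindersF, varsF]
  | rel S ts => simp [bindersF]
  | and φ ψ ihφ ihψ =>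
      simp only [bindersF, varsF]
      exact Finset.union_subset_union ihφ ihψ
  | dia φ ih => exact ih
  | all y φ ih =>
      simp only [bindersF, varsF]
      exact Finset.insert_subset_insert _ ih

lemma mem_varsF_of_mem_fv {A : Fml Cst Rl ar} {x : ℕ} (h : x ∈ A.fv) : x ∈ varsF A := by
  induction A with
  | top => simp [fv] at h
  | rel S ts =>
      obtain ⟨i, hi⟩ := h
      simp only [varsF, Finset.mem_biUnion]
      exact ⟨i, Finset.mem_univ i, by simp [hi, tvars]⟩
  | and φ ψ ihφ ihψ =>
      simp only [varsF, Finset.mem_union]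
      rcases h with h | h
      · exact Or.inl (ihφ h)
      · exact Or.inr (ihψ h)
  | dia φ ih => exact ih h
  | all y φ ih =>
      simp only [varsF, Finset.mem_insert]
      exact Or.inr (ih h.1)

lemma bindersF_mapG (f : Cst → ℕ ⊕ Cst') (A : Fml Cst Rl ar) :
    bindersF (mapG f A) = bindersF A := by
  induction A with
  | top => rfl
  | rel S ts => rfl
  | and φ ψ ihφ ihψ => simp [mapG, bindersF, ihφ, ihψ]
  | dia φ ih => simpa [mapG, bindersF] using ih
  | all y φ ih => simp [mapG, bindersF, ih]

lemma fv_mapG {f : Cst → ℕ ⊕ Cst'} {A : Fml Cst Rl ar} {x : ℕ}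
    (h : x ∈ (mapG f A).fv) : x ∈ A.fv ∨ ∃ c ∈ constsF A, f c = .inl x := by
  induction A with
  | top => simp [mapG, fv] at h
  | rel S ts =>
      obtain ⟨i, hi⟩ := h
      simp only at hi
      cases hts : ts i with
      | inl y =>
          rw [hts] at hi
          simp only [mapTm] at hi
          cases hi
          exact Or.inl ⟨i, hts⟩
      | inr c =>
          rw [hts] at hi
          refine Or.inr ⟨c, ?_, hi⟩
          simp only [constsF, Finset.mem_biUnion]
          exact ⟨i, Finset.mem_univ i, by simp [hts, tconsts]⟩
  | and φ ψ ihφ ihψ =>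
      rcases h with h | h
      · rcases ihφ h with h' | ⟨c, hc, hfc⟩
        · exact Or.inl (Or.inl h')
        · exact Or.inr ⟨c, by simp [constsF, hc], hfc⟩
      · rcases ihψ h with h' | ⟨c, hc, hfc⟩
        · exact Or.inl (Or.inr h')
        · exact Or.inr ⟨c, by simp [constsF, hc], hfc⟩
  | dia φ ih => exact ih h
  | all y φ ih =>
      obtain ⟨h1, h2⟩ := h
      rcases ih h1 with h' | ⟨c, hc, hfc⟩
      · exact Or.inl ⟨h', h2⟩
      · exact Or.inr ⟨c, hc, hfc⟩

lemma mem_varsF_mapG {f : Cst → ℕ ⊕ Cst'} {A : Fml Cst Rl ar} {x : ℕ}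
    (h : x ∈ varsF (mapG f A)) : x ∈ varsF A ∨ ∃ c ∈ constsF A, f c = .inl x := by
  induction A with
  | top => simp [mapG, varsF] at h
  | rel S ts =>
      simp only [mapG, varsF, Finset.mem_biUnion] at h
      obtain ⟨i, -, hi⟩ := h
      cases hts : ts i with
      | inl y =>
          rw [hts] at hi
          simp only [mapTm, tvars, Finset.mem_singleton] at hi
          subst hi
          exact Or.inl (by
            simp only [varsF, Finset.mem_biUnion]
            exact ⟨i, Finset.mem_univ i, by simp [hts, tvars]⟩)
      | inr c =>
          rw [hts] at hi
          simp only [mapTm] at hi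
          cases hfc : f c with
          | inl v =>
              rw [hfc] at hi
              simp only [tvars, Finset.mem_singleton] at hi
              subst hi
              refine Or.inr ⟨c, ?_, hfc⟩
              simp only [constsF, Finset.mem_biUnion]
              exact ⟨i, Finset.mem_univ i, by simp [hts, tconsts]⟩
          | inr d => rw [hfc] at hi; simp [tvars] at hi
  | and φ ψ ihφ ihψ =>
      simp only [mapG, varsF, Finset.mem_union] at h
      rcases h with h | h
      · rcases ihφ h with h' | ⟨c, hc, hfc⟩
        · exact Or.inl (by simp [varsF, h'])
        · exact Or.inr ⟨c, by simp [constsF, hc], hfc⟩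
      · rcases ihψ h with h' | ⟨c, hc, hfc⟩
        · exact Or.inl (by simp [varsF, h'])
        · exact Or.inr ⟨c, by simp [constsF, hc], hfc⟩
  | dia φ ih => exact ih h
  | all y φ ih =>
      simp only [mapG, varsF, Finset.mem_insert] at h
      rcases h with rfl | h
      · exact Or.inl (by simp [varsF])
      · rcases ih h with h' | hg
        · exact Or.inl (by simp [varsF, h'])
        · exact Or.inr hg

lemma mapG_subst {f : Cst → ℕ ⊕ Cst'} {A : Fml Cst Rl ar} {x : ℕ} {t : ℕ ⊕ Cst}
    (h : ∀ c ∈ constsF A, ∀ v, f c = .inl v → v ≠ x) :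
    mapG f (A.subst x t) = (mapG f A).subst x (mapTm f t) := by
  induction A with
  | top => rfl
  | rel S ts =>
      simp only [subst, mapG]
      congr 1
      funext i
      cases hts : ts i with
      | inl y =>
          simp only [substT, mapTm]
          by_cases hyx : y = x <;> simp [substT, mapTm, hyx]
      | inr c =>
          simp only [substT, mapTm]
          cases hfc : f c with
          | inl v =>
              have hvx : v ≠ x := h c (by
                simp only [constsF, Finset.mem_biUnion]
                exact ⟨i, Finset.mem_univ i, by simp [hts, tconsts]⟩) v hfc
              simp [substT, hvx]
          | inr d => simp [substT]
  | and φ ψ ihφ ihψ =>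
      simp only [subst, mapG]
      rw [ihφ (fun c hc => h c (by simp [constsF, hc])),
        ihψ (fun c hc => h c (by simp [constsF, hc]))]
  | dia φ ih =>
      simp only [subst, mapG]
      rw [ih h]
  | all y φ ih =>
      by_cases hyx : y = x
      · simp [subst, mapG, hyx]
      · simp only [subst, mapG, if_neg hyx]
        rw [ih h]

lemma subst_of_not_mem_varsF {A : Fml Cst Rl ar} {x : ℕ} (t : ℕ ⊕ Cst)
    (h : x ∉ varsF A) : A.subst x t = A := by
  induction A with
  | top => rfl
  | rel S ts =>
      simp only [subst]
      congr 1
      funext i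
      cases hts : ts i with
      | inl y =>
          have hyx : y ≠ x := by
            intro hyx
            exact h (by
              simp only [varsF, Finset.mem_biUnion]
              exact ⟨i, Finset.mem_univ i, by simp [hts, tvars, hyx]⟩)
          simp [substT, hyx]
      | inr c => simp [substT]
  | and φ ψ ihφ ihψ =>
      simp only [varsF, Finset.mem_union] at h
      push_neg at h
      simp only [subst]
      rw [ihφ h.1, ihψ h.2]
  | dia φ ih =>
      simp only [subst]
      rw [ih h]
  | all y φ ih =>
      simp only [varsF, Finset.mem_insert] at h
      push_neg at h
      simp only [subst, if_neg (Ne.symm h.1)]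
      rw [ih h.2]

lemma subst_cancel {A : Fml Cst Rl ar} {x v : ℕ} (h : v ∉ varsF A) :
    (A.subst x (.inl v)).subst v (.inl x) = A := by
  induction A with
  | top => rfl
  | rel S ts =>
      simp only [subst]
      congr 1
      funext i
      cases hts : ts i with
      | inl y =>
          by_cases hyx : y = x
          · simp [substT, hyx]
          · have hyv : y ≠ v := by
              intro hyv
              exact h (by
                simp only [varsF, Finset.mem_biUnion]
                exact ⟨i, Finset.mem_univ i, by simp [hts, tvars, hyv]⟩)
            simp [substT, hyx, hyv]
      | inr c => simp [substT]
  | and φ ψ ihφ ihψ =>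
      simp only [varsF, Finset.mem_union] at h
      push_neg at h
      simp only [subst]
      rw [ihφ h.1, ihψ h.2]
  | dia φ ih =>
      simp only [subst]
      rw [ih h]
  | all y φ ih =>
      simp only [varsF, Finset.mem_insert] at h
      push_neg at h
      by_cases hyx : y = x
      · simp only [subst, if_pos hyx]
        simp only [subst, if_neg (Ne.symm h.1)]
        rw [subst_of_not_mem_varsF _ h.2]
      · simp only [subst, if_neg hyx, if_neg (Ne.symm h.1)]
        rw [ih h.2]

lemma freeFor_of_binders {t : ℕ ⊕ Cst} {x : ℕ} {A : Fml Cst Rl ar}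
    (h : ∀ y ∈ bindersF A, t ≠ .inl y) : FreeFor t x A := by
  induction A with
  | top => trivial
  | rel S ts => trivial
  | and φ ψ ihφ ihψ =>
      exact ⟨ihφ (fun y hy => h y (by simp [bindersF, hy])),
        ihψ (fun y hy => h y (by simp [bindersF, hy]))⟩
  | dia φ ih => exact ih h
  | all y φ ih =>
      refine Or.inr ⟨h y (by simp [bindersF]), ih fun z hz => h z (by simp [bindersF, hz])⟩

lemma freeFor_subst_cancel {A : Fml Cst Rl ar} {x v : ℕ} (h : v ∉ varsF A) :
    FreeFor (.inl x) v (A.subst x (.inl v)) := by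
  induction A with
  | top => trivial
  | rel S ts => trivial
  | and φ ψ ihφ ihψ =>
      simp only [varsF, Finset.mem_union] at h
      push_neg at h
      exact ⟨ihφ h.1, ihψ h.2⟩
  | dia φ ih => exact ih h
  | all y φ ih =>
      simp only [varsF, Finset.mem_insert] at h
      push_neg at h
      by_cases hyx : y = x
      · simp only [subst, if_pos hyx]
        left
        intro hv
        exact h.2 (mem_varsF_of_mem_fv hv.1)
      · simp only [subst, if_neg hyx]
        refine Or.inr ⟨?_, ih h.2⟩
        intro hcontra
        injection hcontra with h'
        exact hyx h'.symm

lemma freeFor_mapG_inl {f : Cst → ℕ ⊕ Cst'} {A : Fml Cst Rl ar} {x y : ℕ}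
    (hff : FreeFor (.inl y) x A)
    (hx : ∀ c ∈ constsF A, ∀ v, f c = .inl v → v ≠ x) :
    FreeFor (.inl y) x (mapG f A) := by
  induction A with
  | top => trivial
  | rel S ts => trivial
  | and φ ψ ihφ ihψ =>
      exact ⟨ihφ hff.1 (fun c hc => hx c (by simp [constsF, hc])),
        ihψ hff.2 (fun c hc => hx c (by simp [constsF, hc]))⟩
  | dia φ ih => exact ih hff hx
  | all z φ ih =>
      rcases hff with hff | ⟨hne, hff⟩
      · left
        intro hmem
        rcases fv_mapG (f := f) (A := Fml.all z φ) hmem with h' | ⟨c, hc, hfc⟩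
        · exact hff h'
        · exact hx c hc x hfc rfl
      · have hyz : y ≠ z := fun h => hne (by rw [h])
        refine Or.inr ⟨fun hcontra => hyz (by injection hcontra), ih hff hx⟩

lemma mapG_congr {f g : Cst → ℕ ⊕ Cst'} {A : Fml Cst Rl ar}
    (h : ∀ c ∈ constsF A, f c = g c) : mapG f A = mapG g A := by
  induction A with
  | top => rfl
  | rel S ts =>
      simp only [mapG]
      congr 1
      funext i
      cases hts : ts i with
      | inl z => simp [mapTm]
      | inr c =>
          simp only [mapTm]
          exact h c (by
            simp only [constsF, Finset.mem_biUnion]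
            exact ⟨i, Finset.mem_univ i, by simp [hts, tconsts]⟩)
  | and φ ψ ihφ ihψ =>
      simp only [mapG]
      rw [ihφ (fun c hc => h c (by simp [constsF, hc])),
        ihψ (fun c hc => h c (by simp [constsF, hc]))]
  | dia φ ih =>
      simp only [mapG]
      rw [ih h]
  | all y φ ih =>
      simp only [mapG]
      rw [ih h]

lemma constsF_subst_subset (A : Fml Cst Rl ar) (x : ℕ) (t : ℕ ⊕ Cst) :
    constsF (A.subst x t) ⊆ constsF A ∪ tconsts t := by
  induction A with
  | top => simp [subst, constsF]
  | rel S ts =>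
      intro c hc
      simp only [subst, constsF, Finset.mem_biUnion] at hc
      obtain ⟨i, -, hi⟩ := hc
      simp only [Finset.mem_union]
      cases hts : ts i with
      | inl y =>
          rw [hts] at hi
          simp only [substT] at hi
          by_cases hyx : y = x
          · rw [if_pos hyx] at hi
            exact Or.inr hi
          · rw [if_neg hyx] at hi
            simp [tconsts] at hi
      | inr d =>
          rw [hts] at hi
          simp only [substT, tconsts, Finset.mem_singleton] at hi
          subst hi
          refine Or.inl ?_
          simp only [constsF, Finset.mem_biUnion]
          exact ⟨i, Finset.mem_univ i, by simp [hts, tconsts]⟩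
  | and φ ψ ihφ ihψ =>
      intro c hc
      simp only [subst, constsF, Finset.mem_union] at hc ⊢
      rcases hc with hc | hc
      · rcases Finset.mem_union.mp (ihφ hc) with h | h
        · exact Or.inl (Or.inl h)
        · exact Or.inr h
      · rcases Finset.mem_union.mp (ihψ hc) with h | h
        · exact Or.inl (Or.inr h)
        · exact Or.inr h
  | dia φ ih => exact ih
  | all y φ ih =>
      by_cases hyx : y = x
      · simp only [subst, if_pos hyx, constsF]
        exact Finset.subset_union_left
      · simp only [subst, if_neg hyx, constsF]
        exact ih

lemma varsF_subst_subset (A : Fml Cst Rl ar) (x : ℕ) (t : ℕ ⊕ Cst) :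
    varsF (A.subst x t) ⊆ varsF A ∪ tvars t := by
  induction A with
  | top => simp [subst, varsF]
  | rel S ts =>
      intro v hv
      simp only [subst, varsF, Finset.mem_biUnion] at hv
      obtain ⟨i, -, hi⟩ := hv
      simp only [Finset.mem_union]
      cases hts : ts i with
      | inl y =>
          rw [hts] at hi
          simp only [substT] at hi
          by_cases hyx : y = x
          · rw [if_pos hyx] at hi
            exact Or.inr hi
          · rw [if_neg hyx] at hi
            simp only [tvars, Finset.mem_singleton] at hi
            subst hi
            refine Or.inl ?_
            simp only [varsF, Finset.mem_biUnion]
            exact ⟨i, Finset.mem_univ i, by simp [hts, tvars]⟩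
      | inr d =>
          rw [hts] at hi
          simp [substT, tvars] at hi
  | and φ ψ ihφ ihψ =>
      intro v hv
      simp only [subst, varsF, Finset.mem_union] at hv ⊢
      rcases hv with hv | hv
      · rcases Finset.mem_union.mp (ihφ hv) with h | h
        · exact Or.inl (Or.inl h)
        · exact Or.inr h
      · rcases Finset.mem_union.mp (ihψ hv) with h | h
        · exact Or.inl (Or.inr h)
        · exact Or.inr h
  | dia φ ih => exact ih
  | all y φ ih =>
      by_cases hyx : y = x
      · simp only [subst, if_pos hyx, varsF]
        exact Finset.subset_union_left
      · simp only [subst, if_neg hyx, varsF]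
        intro v hv
        simp only [Finset.mem_insert] at hv
        rcases hv with rfl | hv
        · simp
        · rcases Finset.mem_union.mp (ih hv) with h | h
          · simp [h]
          · simp [h]

lemma subst_ghost {f : Cst → ℕ ⊕ Cst'} {A : Fml Cst Rl ar} {c : Cst} {v v' : ℕ}
    (hv' : v' ∉ varsF A) (hfc : f c = .inl v')
    (huniq : ∀ c' ∈ constsF A, f c' = .inl v' → c' = c) :
    (mapG f A).subst v' (.inl v) = mapG (Function.update f c (.inl v)) A := by
  induction A with
  | top => rfl
  | rel S ts =>
      simp only [mapG, subst]
      congr 1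
      funext i
      cases hts : ts i with
      | inl y =>
          have hyv' : y ≠ v' := by
            intro hyv'
            exact hv' (by
              simp only [varsF, Finset.mem_biUnion]
              exact ⟨i, Finset.mem_univ i, by simp [hts, tvars, hyv']⟩)
          simp [mapTm, substT, hyv']
      | inr c' =>
          have hc'mem : c' ∈ constsF (Fml.rel (ar := ar) S ts) := by
            simp only [constsF, Finset.mem_biUnion]
            exact ⟨i, Finset.mem_univ i, by simp [hts, tconsts]⟩
          simp only [mapTm]
          by_cases hc' : f c' = .inl v'
          · have : c' = c := huniq c' hc'mem hc'
            subst this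
            simp [hc', substT, Function.update_self]
          · have hne : c' ≠ c := by
              intro h
              subst h
              exact hc' hfc
            rw [Function.update_of_ne hne]
            cases hgc : f c' with
            | inl w =>
                have hwv' : w ≠ v' := by
                  intro h
                  subst h
                  exact hc' hgc
                simp [substT, hwv']
            | inr d => simp [substT]
  | and φ ψ ihφ ihψ =>
      simp only [varsF, Finset.mem_union] at hv'
      push_neg at hv'
      simp only [mapG, subst]
      rw [ihφ hv'.1 (fun c' hc' => huniq c' (by simp [constsF, hc'])),
        ihψ hv'.2 (fun c' hc' => huniq c' (by simp [constsF, hc']))]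
  | dia φ ih =>
      simp only [mapG, subst]
      rw [ih hv' huniq]
  | all y φ ih =>
      simp only [varsF, Finset.mem_insert] at hv'
      push_neg at hv'
      simp only [mapG, subst, if_neg (Ne.symm hv'.1)]
      rw [ih hv'.2 huniq]

end Fml

open Fml

variable {Cst Cst' Rl : Type} {ar : Rl → ℕ}

/-- A constant-to-term map is good for a sequent when its ghost variables are
fresh for the sequent and pairwise distinct. -/
def Good (f : Cst' → ℕ ⊕ Cst) (A B : Fml Cst' Rl ar) : Prop :=
  ∀ c ∈ constsF A ∪ constsF B, ∀ v, f c = .inl v →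
    (v ∉ varsF A ∪ varsF B) ∧ ∀ c' ∈ constsF A ∪ constsF B, f c' = .inl v → c' = c

lemma Good.mono {f : Cst' → ℕ ⊕ Cst} {A B A' B' : Fml Cst' Rl ar} (hg : Good f A B)
    (hc : constsF A' ∪ constsF B' ⊆ constsF A ∪ constsF B)
    (hv : varsF A' ∪ varsF B' ⊆ varsF A ∪ varsF B) : Good f A' B' := by
  intro c hcm v hfv
  obtain ⟨h1, h2⟩ := hg c (hc hcm) v hfv
  exact ⟨fun hv' => h1 (hv hv'), fun c' hc' hfc' => h2 c' (hc hc') hfc'⟩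

/-- Invariant used when transferring a derivation from a fresh map back to the
original one. -/
def GhostInv (f f' : Cst' → ℕ ⊕ Cst) (A B : Fml Cst' Rl ar) (c : Cst') : Prop :=
  ∃ v v', f c = .inl v ∧ f' c = .inl v' ∧ v' ∉ varsF A ∪ varsF B ∧
    (∀ c₁ ∈ constsF A ∪ constsF B, ∀ w, f c₁ = .inl w → w ≠ v') ∧
    (∀ c₁ ∈ constsF A ∪ constsF B, c₁ ≠ c → f' c₁ ≠ .inl v')

lemma transfer (A B : Fml Cst' Rl ar) (f : Cst' → ℕ ⊕ Cst) (hg : Good f A B) :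
    ∀ (l : List Cst') (f' : Cst' → ℕ ⊕ Cst),
      (∀ c ∈ constsF A ∪ constsF B, f' c ≠ f c → c ∈ l) →
      (∀ c ∈ constsF A ∪ constsF B, f' c ≠ f c → GhostInv f f' A B c) →
      Der (mapG f' A) (mapG f' B) → Der (mapG f A) (mapG f B) := by
  intro l
  induction l with
  | nil =>
      intro f' hl _ h
      have hA : mapG f' A = mapG f A := mapG_congr fun c hc => by
        by_contra hne
        exact List.not_mem_nil (hl c (by simp [hc]) hne)
      have hB : mapG f' B = mapG f B := mapG_congr fun c hc => by
        by_contra hne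
        exact List.not_mem_nil (hl c (by simp [hc]) hne)
      rwa [hA, hB] at h
  | cons c l ih =>
      intro f' hl hinv h
      by_cases hc : c ∈ constsF A ∪ constsF B ∧ f' c ≠ f c
      · obtain ⟨v, v', hfc, hf'c, hv'fresh, hfw, huniq'⟩ := hinv c hc.1 hc.2
        have hvAB := (hg c hc.1 v hfc).1
        have hvA : v ∉ varsF A := fun h' => hvAB (by simp [h'])
        have hvB : v ∉ varsF B := fun h' => hvAB (by simp [h'])
        have hv'A : v' ∉ varsF A := fun h' => hv'fresh (by simp [h'])
        have hv'B : v' ∉ varsF B := fun h' => hv'fresh (by simp [h'])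
        have hffA : FreeFor (.inl v) v' (mapG f' A) := by
          apply freeFor_of_binders
          intro y hy hcontra
          rw [bindersF_mapG] at hy
          injection hcontra with h'
          exact hvA (h' ▸ bindersF_subset_varsF A hy)
        have hffB : FreeFor (.inl v) v' (mapG f' B) := by
          apply freeFor_of_binders
          intro y hy hcontra
          rw [bindersF_mapG] at hy
          injection hcontra with h'
          exact hvB (h' ▸ bindersF_subset_varsF B hy)
        have h' := Der.inst v' (.inl v) h hffA hffB
        rw [subst_ghost hv'A hf'c
              (fun c' hc' hfc' => by
                by_contra hne
                exact huniq' c' (by simp [hc']) hne hfc'),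
            subst_ghost hv'B hf'c
              (fun c' hc' hfc' => by
                by_contra hne
                exact huniq' c' (by simp [hc']) hne hfc')] at h'
        apply ih (Function.update f' c (.inl v))
        · intro c₀ hc₀ hne₀
          by_cases hcc : c₀ = c
          · subst hcc
            rw [Function.update_self, hfc] at hne₀
            exact absurd rfl hne₀
          · rw [Function.update_of_ne hcc] at hne₀
            rcases List.mem_cons.mp (hl c₀ hc₀ hne₀) with h'' | h''
            · exact absurd h'' hcc
            · exact h''
        · intro c₀ hc₀ hne₀
          by_cases hcc : c₀ = c
          · subst hcc
            rw [Function.update_self, hfc] at hne₀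
            exact absurd rfl hne₀
          · rw [Function.update_of_ne hcc] at hne₀
            obtain ⟨v₀, v'₀, hfc₀, hf'c₀, hfr₀, hfw₀, hu₀⟩ := hinv c₀ hc₀ hne₀
            refine ⟨v₀, v'₀, hfc₀, by rwa [Function.update_of_ne hcc], hfr₀, hfw₀, ?_⟩
            intro c₁ hc₁ hne₁
            by_cases hcc₁ : c₁ = c
            · subst hcc₁
              rw [Function.update_self]
              intro hcontra
              injection hcontra with h''
              exact hfw₀ c₁ hc₁ v hfc h''
            · rw [Function.update_of_ne hcc₁]
              exact hu₀ c₁ hc₁ hne₁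
        · exact h'
      · apply ih f'
        · intro c₀ hc₀ hne₀
          rcases List.mem_cons.mp (hl c₀ hc₀ hne₀) with h'' | h''
          · exact absurd ⟨h'' ▸ hc₀, h'' ▸ hne₀⟩ hc
          · exact h''
        · exact hinv
        · exact h

/-- Ghost values of a map on a finite set of constants. -/
def ghostVals (f : Cst' → ℕ ⊕ Cst) (T : Finset Cst') : Finset ℕ :=
  T.image fun c => Sum.elim id (fun _ => 0) (f c)

lemma mem_ghostVals {f : Cst' → ℕ ⊕ Cst} {T : Finset Cst'} {c : Cst'} {v : ℕ}
    (hc : c ∈ T) (h : f c = .inl v) : v ∈ ghostVals f T :=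
  Finset.mem_image.mpr ⟨c, hc, by rw [h]; rfl⟩

lemma exists_fresh (f : Cst' → ℕ ⊕ Cst) (S T : Finset Cst') (V : Finset ℕ) :
    ∃ f' : Cst' → ℕ ⊕ Cst,
      (∀ c d, c ∈ T → f c = .inr d → f' c = f c) ∧
      (∀ c v, f' c = .inl v → v ∉ V) ∧
      (∀ c c', c ∈ S → c' ∈ S → ∀ v, f' c = .inl v → f' c' = .inl v → c = c') ∧
      (∀ c, (c ∉ T ∨ ∀ d, f c ≠ .inr d) → ∃ v, f' c = .inl v) := by
  classical
  set N := V.sup id + 1 with hN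
  set idx : Cst' → ℕ := fun c => if h : c ∈ S then (S.equivFin ⟨c, h⟩ : ℕ) else S.card with hidx
  refine ⟨fun c => if c ∈ T ∧ ∃ d, f c = .inr d then f c else .inl (N + idx c), ?_, ?_, ?_, ?_⟩
  · intro c d hcT hfc
    simp [hcT, hfc]
  · intro c v h
    simp only at h
    split at h
    · next hcond =>
        obtain ⟨d, hd⟩ := hcond.2
        rw [hd] at h
        cases h
    · next =>
        injection h with h'
        intro hv
        have h2 := Finset.le_sup (f := id) hv
        simp only [id_eq] at h2
        omega
  · intro c c' hcS hc'S v h1 h2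
    simp only at h1 h2
    split at h1
    · next hcond =>
        obtain ⟨d, hd⟩ := hcond.2
        rw [hd] at h1
        cases h1
    · split at h2
      · next hcond =>
          obtain ⟨d, hd⟩ := hcond.2
          rw [hd] at h2
          cases h2
      · injection h1 with h1'
        injection h2 with h2'
        have hidxeq : idx c = idx c' := by omega
        simp only [hidx, dif_pos hcS, dif_pos hc'S] at hidxeq
        have := (S.equivFin).injective (Fin.val_injective (by exact_mod_cast hidxeq))
        exact congrArg Subtype.val this
  · intro c hcond
    have : ¬(c ∈ T ∧ ∃ d, f c = .inr d) := by
      rintro ⟨h1, d, h2⟩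
      rcases hcond with h | h
      · exact h h1
      · exact h d h2
    simp only
    rw [if_neg this]
    exact ⟨_, rfl⟩

lemma good_of {f' : Cst' → ℕ ⊕ Cst} {S : Finset Cst'} {V : Finset ℕ}
    (h2 : ∀ c v, f' c = .inl v → v ∉ V)
    (h3 : ∀ c c', c ∈ S → c' ∈ S → ∀ v, f' c = .inl v → f' c' = .inl v → c = c')
    {P Q : Fml Cst' Rl ar}
    (hS : constsF P ∪ constsF Q ⊆ S) (hV : varsF P ∪ varsF Q ⊆ V) :
    Good f' P Q := by
  intro c hc v hfc
  exact ⟨fun hv => h2 c v hfc (hV hv),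
    fun c' hc' hfc' => h3 c' c (hS hc') (hS hc) v hfc' hfc⟩

lemma good_of_no_ghosts {f : Cst' → ℕ ⊕ Cst} {A B : Fml Cst' Rl ar}
    (h : ∀ c v, (c ∈ constsF A ∨ c ∈ constsF B) → f c ≠ .inl v) : Good f A B := by
  intro c hc v hfc
  exact absurd hfc (h c v (Finset.mem_union.mp hc))

lemma transfer' {tA tB : Fml Cst' Rl ar} {f f' : Cst' → ℕ ⊕ Cst} {S T : Finset Cst'}
    {V : Finset ℕ}
    (hg : Good f tA tB)
    (hT : constsF tA ∪ constsF tB ⊆ T)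
    (hS : constsF tA ∪ constsF tB ⊆ S)
    (hV1 : varsF tA ∪ varsF tB ⊆ V)
    (hV2 : ∀ c ∈ constsF tA ∪ constsF tB, ∀ v, f c = .inl v → v ∈ V)
    (h1 : ∀ c d, c ∈ T → f c = .inr d → f' c = f c)
    (h2 : ∀ c v, f' c = .inl v → v ∉ V)
    (h3 : ∀ c c', c ∈ S → c' ∈ S → ∀ v, f' c = .inl v → f' c' = .inl v → c = c')
    (h4 : ∀ c, (c ∉ T ∨ ∀ d, f c ≠ .inr d) → ∃ v, f' c = .inl v)
    (h : Der (mapG f' tA) (mapG f' tB)) : Der (mapG f tA) (mapG f tB) := by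
  apply transfer tA tB f hg ((constsF tA ∪ constsF tB).toList) f' ?_ ?_ h
  · intro c hc _
    exact Finset.mem_toList.mpr hc
  · intro c hc hne
    cases hfc : f c with
    | inr d => exact absurd (h1 c d (hT hc) hfc) hne
    | inl v =>
        obtain ⟨v', hf'c⟩ := h4 c (Or.inr (fun d h' => by rw [hfc] at h'; cases h'))
        refine ⟨v, v', hfc, hf'c, fun hv => h2 c v' hf'c (hV1 hv), ?_, ?_⟩
        · intro c₁ hc₁ w hw hwv'
          exact h2 c v' hf'c (hwv' ▸ hV2 c₁ hc₁ w hw)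
        · intro c₁ hc₁ hne₁ hcontra
          exact hne₁ (h3 c₁ c (hS hc₁) (hS hc) v' hcontra hf'c)

namespace Fml

lemma mem_constsF {Cst Rl : Type} {ar : Rl → ℕ} {A : Fml Cst Rl ar} {c : Cst} :
    c ∈ constsF A ↔ c ∈ A.consts := by
  induction A with
  | top => simp [constsF, consts]
  | rel S ts =>
      simp only [constsF, Finset.mem_biUnion, Finset.mem_univ, true_and, consts,
        Set.mem_setOf_eq]
      constructor
      · rintro ⟨i, hi⟩
        cases hts : ts i with
        | inl y => rw [hts] at hi; simp [tconsts] at hi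
        | inr d =>
            rw [hts] at hi
            simp only [tconsts, Finset.mem_singleton] at hi
            subst hi
            exact ⟨i, hts⟩
      · rintro ⟨i, hi⟩
        exact ⟨i, by simp [hi, tconsts]⟩
  | and φ ψ ihφ ihψ => simp [constsF, consts, ihφ, ihψ]
  | dia φ ih => exact ih
  | all y φ ih => exact ih

lemma constsF_mapC {Cst Cst' Rl : Type} {ar : Rl → ℕ} {g : Cst → Cst'}
    {A : Fml Cst Rl ar} {c : Cst'} (h : c ∈ constsF (A.mapC g)) :
    ∃ c₀ ∈ constsF A, c = g c₀ := by
  induction A with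
  | top => simp [mapC, constsF] at h
  | rel S ts =>
      simp only [mapC, constsF, Finset.mem_biUnion, Finset.mem_univ, true_and] at h
      obtain ⟨i, hi⟩ := h
      cases hts : ts i with
      | inl y => rw [hts] at hi; simp [Sum.map_inl, tconsts] at hi
      | inr d =>
          rw [hts] at hi
          rw [Sum.map_inr] at hi
          simp only [tconsts, Finset.mem_singleton] at hi
          subst hi
          refine ⟨d, ?_, rfl⟩
          simp only [constsF, Finset.mem_biUnion, Finset.mem_univ, true_and]
          exact ⟨i, by simp [hts, tconsts]⟩
  | and φ ψ ihφ ihψ =>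
      simp only [mapC, constsF, Finset.mem_union] at h
      rcases h with h | h
      · obtain ⟨c₀, hc₀, rfl⟩ := ihφ h
        exact ⟨c₀, by simp [constsF, hc₀], rfl⟩
      · obtain ⟨c₀, hc₀, rfl⟩ := ihψ h
        exact ⟨c₀, by simp [constsF, hc₀], rfl⟩
  | dia φ ih => exact ih h
  | all y φ ih => exact ih h

lemma mapG_mapC {Cst C Rl : Type} {ar : Rl → ℕ} (f : Cst ⊕ C → ℕ ⊕ Cst)
    (hf : ∀ c, f (Sum.inl c) = .inr c) (A : Fml Cst Rl ar) :
    mapG f (A.mapC Sum.inl) = A := by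
  induction A with
  | top => rfl
  | rel S ts =>
      simp only [mapC, mapG]
      congr 1
      funext i
      cases hts : ts i with
      | inl y => simp [Sum.map, mapTm]
      | inr c => simp [Sum.map, mapTm, hf]
  | and φ ψ ihφ ihψ => simp only [mapC, mapG]; rw [ihφ, ihψ]
  | dia φ ih => simp only [mapC, mapG]; rw [ih]
  | all y φ ih => simp only [mapC, mapG]; rw [ih]

end Fml

set_option maxHeartbeats 1600000 in
theorem der_mapG {Cst Cst' Rl : Type} {ar : Rl → ℕ} {A B : Fml Cst' Rl ar} (h : Der A B) :
    ∀ f : Cst' → ℕ ⊕ Cst, Good f A B → Der (mapG f A) (mapG f B) := by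
  induction h with
  | top φ => exact fun f _ => Der.top _
  | refl φ => exact fun f _ => Der.refl _
  | andE1 φ ψ => exact fun f _ => Der.andE1 _ _
  | andE2 φ ψ => exact fun f _ => Der.andE2 _ _
  | @andI φ ψ χ h1 h2 ih1 ih2 =>
      intro f hg
      exact Der.andI
        (ih1 f (hg.mono
          (by intro a ha; simp only [Fml.constsF, Finset.mem_union] at ha ⊢; tauto)
          (by intro a ha; simp only [Fml.varsF, Finset.mem_union] at ha ⊢; tauto)))
        (ih2 f (hg.mono
          (by intro a ha; simp only [Fml.constsF, Finset.mem_union] at ha ⊢; tauto)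
          (by intro a ha; simp only [Fml.varsF, Finset.mem_union] at ha ⊢; tauto)))
  | @cut φ ψ χ h1 h2 ih1 ih2 =>
      intro f hg
      obtain ⟨f', p1, p2, p3, p4⟩ := exists_fresh f
        (constsF φ ∪ constsF ψ ∪ constsF χ)
        (constsF φ ∪ constsF χ)
        (varsF φ ∪ varsF ψ ∪ varsF χ ∪ ghostVals f (constsF φ ∪ constsF χ))
      refine transfer' hg (Finset.Subset.refl _)
        (by intro a ha; simp only [Finset.mem_union] at ha ⊢; tauto)
        (by intro a ha; simp only [Finset.mem_union] at ha ⊢; tauto)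
        (fun c hc v hfc => by
          simp only [Finset.mem_union]
          exact Or.inr (mem_ghostVals hc hfc))
        p1 p2 p3 p4 ?_
      exact Der.cut
        (ih1 f' (good_of p2 p3
          (by intro a ha; simp only [Finset.mem_union] at ha ⊢; tauto)
          (by intro a ha; simp only [Finset.mem_union] at ha ⊢; tauto)))
        (ih2 f' (good_of p2 p3
          (by intro a ha; simp only [Finset.mem_union] at ha ⊢; tauto)
          (by intro a ha; simp only [Finset.mem_union] at ha ⊢; tauto)))
  | @diaMono φ ψ h ih =>
      intro f hg
      exact Der.diaMono (ih f (hg.mono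
        (by intro a ha; simp only [Fml.constsF, Finset.mem_union] at ha ⊢; tauto)
        (by intro a ha; simp only [Fml.varsF, Finset.mem_union] at ha ⊢; tauto)))
  | diaTrans φ => exact fun f _ => Der.diaTrans _
  | @allI φ ψ x h hx ih =>
      intro f hg
      have h1 := ih f (hg.mono
        (by intro a ha; simp only [Fml.constsF, Finset.mem_union] at ha ⊢; tauto)
        (by
          intro a ha
          simp only [Fml.varsF, Finset.mem_union, Finset.mem_insert] at ha ⊢
          tauto))
      refine Der.allI x h1 ?_
      intro hmem
      rcases fv_mapG hmem with h' | ⟨c, hc, hfc⟩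
      · exact hx h'
      · refine ((hg c (by simp only [Finset.mem_union]; exact Or.inl hc) x hfc).1) ?_
        simp [Fml.varsF]
  | @allE φ ψ x t h hff ih =>
      intro f hg
      obtain ⟨f', p1, p2, p3, p4⟩ := exists_fresh f
        (constsF (Fml.all x φ) ∪ constsF ψ ∪ tconsts t)
        (constsF (Fml.all x φ) ∪ constsF ψ)
        (varsF (Fml.all x φ) ∪ varsF ψ ∪ tvars t ∪
          ghostVals f (constsF (Fml.all x φ) ∪ constsF ψ))
      have hxV : x ∈ varsF (Fml.all x φ) ∪ varsF ψ ∪ tvars t ∪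
          ghostVals f (constsF (Fml.all x φ) ∪ constsF ψ) := by
        simp [Fml.varsF]
      have hgx : ∀ c ∈ constsF φ, ∀ v, f' c = .inl v → v ≠ x :=
        fun c _ v hfc hvx => p2 c v hfc (hvx ▸ hxV)
      have h1 := ih f' (good_of p2 p3
        (by
          intro a ha
          simp only [Finset.mem_union] at ha ⊢
          rcases ha with ha | ha
          · rcases Finset.mem_union.mp (constsF_subst_subset φ x t ha) with h' | h'
            · exact Or.inl (Or.inl (by simpa [Fml.constsF] using h'))
            · exact Or.inr h'
          · exact Or.inl (Or.inr ha))
        (by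
          intro a ha
          simp only [Finset.mem_union] at ha ⊢
          rcases ha with ha | ha
          · rcases Finset.mem_union.mp (varsF_subst_subset φ x t ha) with h' | h'
            · exact Or.inl (Or.inl (Or.inl (by simp [Fml.varsF, h'])))
            · exact Or.inl (Or.inr h')
          · exact Or.inl (Or.inl (Or.inr ha))))
      rw [mapG_subst hgx] at h1
      have hFF : FreeFor (mapTm f' t) x (mapG f' φ) := by
        cases t with
        | inl y => exact freeFor_mapG_inl hff hgx
        | inr c =>
            cases hfc : f' c with
            | inl v =>
                apply freeFor_of_binders
                intro y hy hcontra
                rw [bindersF_mapG] at hy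
                have : mapTm f' (Sum.inr c) = f' c := rfl
                rw [this, hfc] at hcontra
                injection hcontra with h'
                refine p2 c v hfc ?_
                subst h'
                have := bindersF_subset_varsF φ hy
                simp only [Finset.mem_union]
                exact Or.inl (Or.inl (Or.inl (by simp [Fml.varsF, this])))
            | inr d =>
                apply freeFor_of_binders
                intro y hy hcontra
                have : mapTm f' (Sum.inr c) = f' c := rfl
                rw [this, hfc] at hcontra
                cases hcontra
      have h2 : Der (mapG f' (Fml.all x φ)) (mapG f' ψ) := Der.allE x (mapTm f' t) h1 hFF
      refine transfer' hg (Finset.Subset.refl _)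
        (by intro a ha; simp only [Finset.mem_union] at ha ⊢; tauto)
        (by intro a ha; simp only [Finset.mem_union] at ha ⊢; tauto)
        (fun c hc v hfc => by
          simp only [Finset.mem_union]
          exact Or.inr (mem_ghostVals hc hfc))
        p1 p2 p3 p4 h2
  | @inst φ ψ x t h hf1 hf2 ih =>
      intro f hg
      obtain ⟨f', p1, p2, p3, p4⟩ := exists_fresh f
        (constsF φ ∪ constsF ψ ∪ tconsts t)
        (constsF (φ.subst x t) ∪ constsF (ψ.subst x t))
        (varsF φ ∪ varsF ψ ∪ tvars t ∪ {x} ∪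
          ghostVals f (constsF (φ.subst x t) ∪ constsF (ψ.subst x t)))
      have hxV : x ∈ varsF φ ∪ varsF ψ ∪ tvars t ∪ {x} ∪
          ghostVals f (constsF (φ.subst x t) ∪ constsF (ψ.subst x t)) := by
        simp
      have hgxφ : ∀ c ∈ constsF φ, ∀ v, f' c = .inl v → v ≠ x :=
        fun c _ v hfc hvx => p2 c v hfc (hvx ▸ hxV)
      have hgxψ : ∀ c ∈ constsF ψ, ∀ v, f' c = .inl v → v ≠ x :=
        fun c _ v hfc hvx => p2 c v hfc (hvx ▸ hxV)
      have h1 := ih f' (good_of p2 p3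
        (by intro a ha; simp only [Finset.mem_union] at ha ⊢; tauto)
        (by intro a ha; simp only [Finset.mem_union] at ha ⊢; tauto))
      have hFF : ∀ (χ : Fml Cst' Rl ar), FreeFor t x χ →
          (∀ c ∈ constsF χ, ∀ v, f' c = .inl v → v ≠ x) →
          varsF χ ⊆ varsF φ ∪ varsF ψ →
          FreeFor (mapTm f' t) x (mapG f' χ) := by
        intro χ hffχ hgχ hvχ
        cases t with
        | inl y => exact freeFor_mapG_inl hffχ hgχ
        | inr c =>
            cases hfc : f' c with
            | inl v =>
                apply freeFor_of_binders
                intro y hy hcontra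
                rw [bindersF_mapG] at hy
                have : mapTm f' (Sum.inr c) = f' c := rfl
                rw [this, hfc] at hcontra
                injection hcontra with h'
                refine p2 c v hfc ?_
                subst h'
                have := hvχ (bindersF_subset_varsF χ hy)
                simp only [Finset.mem_union] at this ⊢
                tauto
            | inr d =>
                apply freeFor_of_binders
                intro y hy hcontra
                have : mapTm f' (Sum.inr c) = f' c := rfl
                rw [this, hfc] at hcontra
                cases hcontra
      have h2 := Der.inst x (mapTm f' t) h1
        (hFF φ hf1 hgxφ (by intro a ha; simp only [Finset.mem_union]; tauto))
        (hFF ψ hf2 hgxψ (by intro a ha; simp only [Finset.mem_union]; tauto))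
      rw [← mapG_subst hgxφ, ← mapG_subst hgxψ] at h2
      refine transfer' hg
        (Finset.Subset.refl _)
        (by
          intro a ha
          simp only [Finset.mem_union] at ha ⊢
          rcases ha with ha | ha
          · rcases Finset.mem_union.mp (constsF_subst_subset φ x t ha) with h' | h'
            · tauto
            · tauto
          · rcases Finset.mem_union.mp (constsF_subst_subset ψ x t ha) with h' | h'
            · tauto
            · tauto)
        (by
          intro a ha
          simp only [Finset.mem_union] at ha ⊢
          rcases ha with ha | ha
          · rcases Finset.mem_union.mp (varsF_subst_subset φ x t ha) with h' | h'
            · tauto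
            · tauto
          · rcases Finset.mem_union.mp (varsF_subst_subset ψ x t ha) with h' | h'
            · tauto
            · tauto)
        (fun c hc v hfc => by
          simp only [Finset.mem_union]
          exact Or.inr (mem_ghostVals hc hfc))
        p1 p2 p3 p4 h2
  | @genC φ ψ x c h hc1 hc2 ih =>
      intro f hg
      obtain ⟨f', p1, p2, p3, p4⟩ := exists_fresh f
        (constsF φ ∪ constsF ψ ∪ {c})
        (constsF φ ∪ constsF ψ)
        (varsF φ ∪ varsF ψ ∪ {x} ∪ ghostVals f (constsF φ ∪ constsF ψ))
      have hcT : c ∉ constsF φ ∪ constsF ψ := by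
        simp only [Finset.mem_union]
        rintro (hc | hc)
        · exact hc1 (mem_constsF.mp hc)
        · exact hc2 (mem_constsF.mp hc)
      obtain ⟨v, hv⟩ := p4 c (Or.inl hcT)
      have hxV : x ∈ varsF φ ∪ varsF ψ ∪ {x} ∪ ghostVals f (constsF φ ∪ constsF ψ) := by
        simp
      have hgxφ : ∀ c' ∈ constsF φ, ∀ w, f' c' = .inl w → w ≠ x :=
        fun c' _ w hfc hwx => p2 c' w hfc (hwx ▸ hxV)
      have hgxψ : ∀ c' ∈ constsF ψ, ∀ w, f' c' = .inl w → w ≠ x :=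
        fun c' _ w hfc hwx => p2 c' w hfc (hwx ▸ hxV)
      have h1 := ih f' (good_of p2 p3
        (by
          intro a ha
          simp only [Finset.mem_union] at ha ⊢
          rcases ha with ha | ha
          · rcases Finset.mem_union.mp (constsF_subst_subset φ x (.inr c) ha) with h' | h'
            · tauto
            · simp only [Fml.tconsts, Finset.mem_singleton] at h'
              subst h'
              simp
          · rcases Finset.mem_union.mp (constsF_subst_subset ψ x (.inr c) ha) with h' | h'
            · tauto
            · simp only [Fml.tconsts, Finset.mem_singleton] at h'
              subst h'
              simp)
        (by
          intro a ha
          simp only [Finset.mem_union] at ha ⊢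
          rcases ha with ha | ha
          · rcases Finset.mem_union.mp (varsF_subst_subset φ x (.inr c) ha) with h' | h'
            · tauto
            · simp [Fml.tvars] at h'
          · rcases Finset.mem_union.mp (varsF_subst_subset ψ x (.inr c) ha) with h' | h'
            · tauto
            · simp [Fml.tvars] at h'))
      rw [mapG_subst hgxφ, mapG_subst hgxψ] at h1
      have hmt : mapTm f' (Sum.inr c) = Sum.inl v := by rw [show mapTm f' (Sum.inr c) = f' c from rfl, hv]
      rw [hmt] at h1
      have hvfresh : ∀ (χ : Fml Cst' Rl ar), χ = φ ∨ χ = ψ → v ∉ varsF (mapG f' χ) := by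
        rintro χ hχ hmem
        rcases mem_varsF_mapG hmem with h' | ⟨c', hc', hfc'⟩
        · refine p2 c v hv ?_
          simp only [Finset.mem_union]
          rcases hχ with rfl | rfl
          · exact Or.inl (Or.inl (Or.inl h'))
          · exact Or.inl (Or.inl (Or.inr h'))
        · have hc'S : c' ∈ constsF φ ∪ constsF ψ ∪ {c} := by
            simp only [Finset.mem_union]
            rcases hχ with rfl | rfl
            · tauto
            · tauto
          have hcS : c ∈ constsF φ ∪ constsF ψ ∪ ({c} : Finset Cst') := by simp
          have := p3 c' c hc'S hcS v hfc' hv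
          subst this
          apply hcT
          rcases hχ with rfl | rfl
          · simp only [Finset.mem_union]; tauto
          · simp only [Finset.mem_union]; tauto
      have hvφ := hvfresh φ (Or.inl rfl)
      have hvψ := hvfresh ψ (Or.inr rfl)
      have h2 := Der.inst v (Sum.inl x) h1 (freeFor_subst_cancel hvφ) (freeFor_subst_cancel hvψ)
      rw [subst_cancel hvφ, subst_cancel hvψ] at h2
      refine transfer' hg ?_ ?_ ?_ ?_ p1 p2 p3 p4 h2
      · exact Finset.Subset.refl _
      · intro a ha; simp only [Finset.mem_union] at ha ⊢; tauto
      · intro a ha; simp only [Finset.mem_union] at ha ⊢; tauto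
      · intro c' hc' w hfc'
        simp only [Finset.mem_union]
        exact Or.inr (mem_ghostVals hc' hfc')

end Extension
theorem signature_extension (Cst C Rl : Type) (ar : Rl → ℕ)
    (φ ψ : Fml Cst Rl ar)
    (h : Der (φ.mapC (Sum.inl : Cst → Cst ⊕ C)) (ψ.mapC (Sum.inl : Cst → Cst ⊕ C))) :
    Der φ ψ := by
  have hG : Good
      (Sum.elim (fun c : Cst => (Sum.inr c : ℕ ⊕ Cst)) fun _ : C => (Sum.inl 0 : ℕ ⊕ Cst))
      (φ.mapC (Sum.inl : Cst → Cst ⊕ C)) (ψ.mapC (Sum.inl : Cst → Cst ⊕ C)) := by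
    apply good_of_no_ghosts
    intro cc v hcc hfv
    rcases hcc with h' | h' <;>
    · obtain ⟨c₀, -, rfl⟩ := Fml.constsF_mapC h'
      simp at hfv
  have h2 := der_mapG h _ hG
  rwa [Fml.mapG_mapC _ (fun c => rfl) φ, Fml.mapG_mapC _ (fun c => rfl) ψ] at h2


end QRC1
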